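/- Let a(t) = (0, 0, 2t) for t ∈ [1, 2] and c = 1. A point x = (x₁, x₂, x₃) ∈ ℝ³ with |x| = 6 and x₃ ∈ [-6, 3] is observable; more precisely, for such x the function h(t) = t + |x - a(t)| is monotonically increasing on [1, 2] and satisfies h(2) - h(1) ≥ 1. -/

import Mathlib

open Set

/-- The orbit `a(t) = (0, 0, 2t)`. -/
noncomputable def a4 (t : ℝ) : EuclideanSpace ℝ (Fin 3) :=
  (WithLp.equiv 2 (Fin 3 → ℝ)).symm ![0, 0, 2 * t]

lemma key4 (x : EuclideanSpace ℝ (Fin 3)) (hx : ‖x‖ = 6) (t : ℝ) :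
    ‖x - a4 t‖ = Real.sqrt (36 - 4 * t * (x 2) + 4 * t ^ 2) := by
  have h1 : ‖x‖ ^ 2 = 36 := by rw [hx]; norm_num
  rw [EuclideanSpace.norm_eq] at h1
  rw [Real.sq_sqrt (by positivity)] at h1
  simp only [Fin.sum_univ_three, Real.norm_eq_abs, sq_abs] at h1
  rw [EuclideanSpace.norm_eq]
  simp only [Fin.sum_univ_three, Real.norm_eq_abs, sq_abs]
  congr 1
  simp only [PiLp.sub_apply, a4, WithLp.equiv_symm_apply, PiLp.toLp_apply]
  simp [Matrix.cons_val_zero, Matrix.cons_val_one]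
  nlinarith [h1]

/-- For the straight-line trajectory `a(t) = (0,0,2t)`, `t ∈ [1,2]`, `c = 1`: every
`x` with `|x| = 6` and `x₃ ∈ [-6, 3]` is observable; more precisely,
`h(t) = t + |x - a(t)|` is monotonically increasing on `[1,2]` and `h(2) - h(1) ≥ 1`. -/
theorem stmt4 (x : EuclideanSpace ℝ (Fin 3)) (hx : ‖x‖ = 6)
    (hx3 : x 2 ∈ Icc (-6 : ℝ) 3) :
    MonotoneOn (fun t => t + ‖x - a4 t‖) (Icc (1 : ℝ) 2) ∧
    1 ≤ (2 + ‖x - a4 2‖) - (1 + ‖x - a4 1‖) := by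
  obtain ⟨hy1, hy2⟩ := hx3
  set y := x 2 with hy
  have hB : ∀ t : ℝ, 1 ≤ t → t ≤ 2 → (0:ℝ) ≤ 36 - 4 * t * y + 4 * t ^ 2 := by
    intro t h1 h2; nlinarith
  constructor
  · intro s hs t ht hst
    simp only [key4 x hx]
    have hBt := hB t ht.1 ht.2
    have hBs := hB s hs.1 hs.2
    have hsB : 2 * y - 2 * t - 2 * s ≤ Real.sqrt (36 - 4 * t * y + 4 * t ^ 2) := by
      rcases le_or_gt (2 * y - 2 * t - 2 * s) 0 with h | h
      · exact h.trans (Real.sqrt_nonneg _)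
      · rw [show (2 * y - 2 * t - 2 * s : ℝ) = Real.sqrt ((2 * y - 2 * t - 2 * s) ^ 2) by
          rw [Real.sqrt_sq h.le]]
        apply Real.sqrt_le_sqrt
        nlinarith [hs.1, hs.2, ht.1, ht.2, hst]
    have hAle : Real.sqrt (36 - 4 * s * y + 4 * s ^ 2) ≤
        (t - s) + Real.sqrt (36 - 4 * t * y + 4 * t ^ 2) := by
      rw [show Real.sqrt (36 - 4 * s * y + 4 * s ^ 2)
          = Real.sqrt (36 - 4 * s * y + 4 * s ^ 2) from rfl]
      have h2 : 0 ≤ (t - s) + Real.sqrt (36 - 4 * t * y + 4 * t ^ 2) := by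
        have := Real.sqrt_nonneg (36 - 4 * t * y + 4 * t ^ 2); linarith
      rw [← Real.sqrt_sq h2]
      apply Real.sqrt_le_sqrt
      have hsq := Real.sq_sqrt hBt
      nlinarith [Real.sqrt_nonneg (36 - 4 * t * y + 4 * t ^ 2), hsq, hsB, hst]
    linarith
  · simp only [key4 x hx]
    have h40 : Real.sqrt (36 - 4 * 1 * y + 4 * 1 ^ 2) ≤
        Real.sqrt (36 - 4 * 2 * y + 4 * 2 ^ 2) := by
      apply Real.sqrt_le_sqrt; nlinarith
    linarith
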